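/- Let κ > 2 and let D be the open unit ball B(0,1) in ℝ². There exists a constant C_H > 0 such that for every continuously differentiable function g : D → ℝ with ∫_D (g(r)² + |∇g(r)|²)(1−|r|²)^{κ/2} dr < ∞ one has the weighted Hardy-type inequality ∫_D g(r)² (1−|r|²)^{κ/2−2} dr ≤ C_H ∫_D (g(r)² + |∇g(r)|²)(1−|r|²)^{κ/2} dr. -/

import Mathlib

open MeasureTheory Real

noncomputable section

abbrev E2 : Type := EuclideanSpace ℝ (Fin 2)

open Set intervalIntegral

-- helper: indicator of continuous-on-open function is measurable
lemma measurable_indicator_of_isOpen {α : Type*} [TopologicalSpace α] [MeasurableSpace α]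
    [OpensMeasurableSpace α] {s : Set α} (hs : IsOpen s) {f : α → ℝ}
    (hf : ContinuousOn f s) : Measurable (s.indicator f) := by
  refine measurable_of_isOpen fun U hU => ?_
  classical
  have : s.indicator f ⁻¹' U =
      (s ∩ f ⁻¹' U) ∪ (if (0:ℝ) ∈ U then sᶜ else ∅) := by
    ext x
    by_cases hx : x ∈ s <;> simp [Set.indicator_apply, hx] <;> split_ifs with h0 <;> simp [hx, h0]
  rw [this]
  refine MeasurableSet.union (hf.isOpen_inter_preimage hs hU).measurableSet ?_
  split_ifs <;> simp [hs.measurableSet.compl]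



theorem lintegral_comp_polarCoord_symm' (f : ℝ × ℝ → ENNReal) :
    (∫⁻ p in polarCoord.target, ENNReal.ofReal p.1 * f (polarCoord.symm p)) = ∫⁻ p, f p := by
  set B : ℝ × ℝ → ℝ × ℝ →L[ℝ] ℝ × ℝ := fun p =>
    LinearMap.toContinuousLinearMap (Matrix.toLin (Module.Basis.finTwoProd ℝ) (Module.Basis.finTwoProd ℝ)
      !![Real.cos p.2, -p.1 * Real.sin p.2; Real.sin p.2, p.1 * Real.cos p.2])
  have A : ∀ p ∈ polarCoord.target, HasFDerivWithinAt polarCoord.symm (B p) polarCoord.target p :=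
    fun p _ => (hasFDerivAt_polarCoord_symm p).hasFDerivWithinAt
  have B_det : ∀ p, (B p).det = p.1 := by
    intro p
    conv_rhs => rw [← one_mul p.1, ← cos_sq_add_sin_sq p.2]
    simp only [B, neg_mul, LinearMap.det_toContinuousLinearMap, LinearMap.det_toLin,
      Matrix.det_fin_two_of, sub_neg_eq_add]
    ring
  symm
  calc
    ∫⁻ p, f p = ∫⁻ p in polarCoord.source, f p := by
      rw [← setLIntegral_univ]
      exact setLIntegral_congr polarCoord_source_ae_eq_univ.symm
    _ = ∫⁻ p in polarCoord.symm '' polarCoord.target, f p := by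
      rw [polarCoord.symm_image_target_eq_source]
    _ = ∫⁻ p in polarCoord.target, ENNReal.ofReal |(B p).det| * f (polarCoord.symm p) := by
      exact lintegral_image_eq_lintegral_abs_det_fderiv_mul volume
        polarCoord.open_target.measurableSet A polarCoord.symm.injOn f
    _ = ∫⁻ p in polarCoord.target, ENNReal.ofReal p.1 * f (polarCoord.symm p) := by
      refine setLIntegral_congr_fun_ae polarCoord.open_target.measurableSet
        (Filter.Eventually.of_forall fun x hx => ?_)
      rw [B_det, abs_of_pos hx.1]



def T : ℝ × ℝ ≃ᵐ E2 :=
  ((MeasurableEquiv.toLp 2 (Fin 2 → ℝ)).symm.trans (MeasurableEquiv.finTwoArrow)).symm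

lemma T_mp : MeasurePreserving (T : ℝ × ℝ → E2) :=
  ((EuclideanSpace.volume_preserving_symm_measurableEquiv_toLp (Fin 2)).trans
    (volume_preserving_finTwoArrow ℝ)).symm _

lemma T_apply (p : ℝ × ℝ) (i : Fin 2) : (T p : E2) i = ![p.1, p.2] i := by
  simp [T, MeasurableEquiv.toLp, MeasurableEquiv.finTwoArrow,
    MeasurableEquiv.piFinTwo, MeasurableEquiv.piCongrLeft, MeasurableEquiv.trans,
    MeasurableEquiv.symm]

lemma T_norm_sq (p : ℝ × ℝ) : ‖(T p : E2)‖ ^ 2 = p.1 ^ 2 + p.2 ^ 2 := by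
  rw [EuclideanSpace.norm_eq]
  rw [Real.sq_sqrt (by positivity)]
  simp [T_apply, Fin.sum_univ_two, sq_abs]

lemma T_smul (t : ℝ) (p : ℝ × ℝ) : (T (t * p.1, t * p.2) : E2) = t • T p := by
  ext i
  have h1 := T_apply (t * p.1, t * p.2) i
  have h2 := T_apply p i
  fin_cases i <;> simp_all



lemma v_norm (θ : ℝ) : ‖(T (Real.cos θ, Real.sin θ) : E2)‖ = 1 := by
  have h := T_norm_sq (Real.cos θ, Real.sin θ)
  simp only [sin_sq_add_cos_sq, cos_sq_add_sin_sq] at h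
  nlinarith [norm_nonneg (T (Real.cos θ, Real.sin θ) : E2)]

lemma smul_norm (θ ρ : ℝ) : ‖(ρ • T (Real.cos θ, Real.sin θ) : E2)‖ = |ρ| := by
  rw [norm_smul, v_norm]; simp

lemma inner_eq (f : E2 → ℝ) (θ : ℝ) :
    (∫⁻ ρ in Ioi (0:ℝ), ENNReal.ofReal ρ *
      (Metric.ball (0:E2) 1).indicator (fun r => ENNReal.ofReal (f r)) (T (polarCoord.symm (ρ, θ))))
    = ∫⁻ ρ in Ioo (0:ℝ) 1, ENNReal.ofReal (ρ * f (ρ • T (Real.cos θ, Real.sin θ))) := by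
  set v : E2 := T (Real.cos θ, Real.sin θ) with hv
  have hsymm : ∀ ρ : ℝ, (T (polarCoord.symm (ρ, θ)) : E2) = ρ • v := by
    intro ρ
    rw [polarCoord_symm_apply]
    exact T_smul ρ (Real.cos θ, Real.sin θ)
  have hpt : ∀ ρ ∈ Ioi (0:ℝ),
      ENNReal.ofReal ρ * (Metric.ball (0:E2) 1).indicator (fun r => ENNReal.ofReal (f r))
        (T (polarCoord.symm (ρ, θ)))
      = (Ioo (0:ℝ) 1).indicator (fun ρ => ENNReal.ofReal (ρ * f (ρ • v))) ρ := by
    intro ρ hρ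
    rw [hsymm ρ]
    have hm : (ρ • v ∈ Metric.ball (0:E2) 1) ↔ ρ < 1 := by
      rw [Metric.mem_ball, dist_zero_right, smul_norm, abs_of_pos hρ]
    by_cases h1 : ρ < 1
    · rw [Set.indicator_of_mem (hm.mpr h1), Set.indicator_of_mem (Set.mem_Ioo.mpr ⟨hρ, h1⟩),
        ENNReal.ofReal_mul (le_of_lt hρ)]
    · rw [Set.indicator_of_notMem (fun hc => h1 (hm.mp hc)),
        Set.indicator_of_notMem (fun hc => h1 hc.2), mul_zero]
  rw [setLIntegral_congr_fun_ae measurableSet_Ioi (Filter.Eventually.of_forall hpt),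
    lintegral_indicator measurableSet_Ioo _, Measure.restrict_restrict measurableSet_Ioo]
  congr 1
  rw [Set.Ioo_inter_Ioi]
  simp

lemma transfer (f : E2 → ℝ) (hf : Measurable ((Metric.ball (0:E2) 1).indicator f)) :
    ∫⁻ r in Metric.ball (0:E2) 1, ENNReal.ofReal (f r)
    = ∫⁻ θ in Ioo (-π) π, ∫⁻ ρ in Ioo (0:ℝ) 1,
        ENNReal.ofReal (ρ * f (ρ • T (Real.cos θ, Real.sin θ))) := by
  have hind : Measurable ((Metric.ball (0:E2) 1).indicator fun r => ENNReal.ofReal (f r)) := by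
    have : (Metric.ball (0:E2) 1).indicator (fun r => ENNReal.ofReal (f r))
        = fun r => ENNReal.ofReal ((Metric.ball (0:E2) 1).indicator f r) := by
      funext r
      by_cases h : r ∈ Metric.ball (0:E2) 1 <;>
        simp [Set.indicator_of_mem, Set.indicator_of_notMem, h]
    rw [this]
    exact hf.ennreal_ofReal
  have hps : Measurable (polarCoord.symm : ℝ × ℝ → ℝ × ℝ) := by
    have : (polarCoord.symm : ℝ × ℝ → ℝ × ℝ)
        = fun q => (q.1 * Real.cos q.2, q.1 * Real.sin q.2) := by
      funext q; rw [polarCoord_symm_apply]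
    rw [this]
    fun_prop
  have hΦ : Measurable fun q : ℝ × ℝ => ENNReal.ofReal q.1 *
      (Metric.ball (0:E2) 1).indicator (fun r => ENNReal.ofReal (f r)) (T (polarCoord.symm q)) :=
    measurable_fst.ennreal_ofReal.mul (hind.comp (T.measurable.comp hps))
  calc
    ∫⁻ r in Metric.ball (0:E2) 1, ENNReal.ofReal (f r)
      = ∫⁻ r, (Metric.ball (0:E2) 1).indicator (fun r => ENNReal.ofReal (f r)) r :=
        (lintegral_indicator Metric.isOpen_ball.measurableSet _).symm
    _ = ∫⁻ p : ℝ × ℝ, (Metric.ball (0:E2) 1).indicator (fun r => ENNReal.ofReal (f r)) (T p) :=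
        (T_mp.lintegral_comp_emb T.measurableEmbedding _).symm
    _ = ∫⁻ q in polarCoord.target, ENNReal.ofReal q.1 *
          (Metric.ball (0:E2) 1).indicator (fun r => ENNReal.ofReal (f r)) (T (polarCoord.symm q)) :=
        (lintegral_comp_polarCoord_symm' _).symm
    _ = ∫⁻ θ in Ioo (-π) π, ∫⁻ ρ in Ioi (0:ℝ), ENNReal.ofReal ρ *
          (Metric.ball (0:E2) 1).indicator (fun r => ENNReal.ofReal (f r))
            (T (polarCoord.symm (ρ, θ))) := by
        rw [polarCoord_target, Measure.volume_eq_prod, ← Measure.prod_restrict,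
          lintegral_prod_symm _ (hΦ.aemeasurable)]
    _ = _ := by
        exact setLIntegral_congr_fun_ae measurableSet_Ioo
          (Filter.Eventually.of_forall fun θ _ => inner_eq f θ)



lemma amgm (β t x y : ℝ) (hb : 0 < β - 1) (ht : 1/4 ≤ t) :
    2*(x*y) ≤ (β-1)*t*x^2 + (16/(β-1))*(t*y^2) := by
  have h2 : 2*(x*y)*(β-1) ≤ (β-1)^2*t*x^2 + 16*(t*y^2) := by
    nlinarith [sq_nonneg ((β-1)*x - 4*y),
      mul_nonneg (by linarith : (0:ℝ) ≤ t - 1/4)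
        (add_nonneg (mul_nonneg (sq_nonneg (β-1)) (sq_nonneg x))
          (mul_nonneg (by norm_num : (0:ℝ) ≤ 16) (sq_nonneg y)))]
  have h3 : ((β-1)*t*x^2 + (16/(β-1))*(t*y^2))*(β-1) = (β-1)^2*t*x^2 + 16*(t*y^2) := by
    field_simp
  refine le_of_mul_le_mul_right ?_ hb
  rw [h3]; exact h2

lemma hasDerivAt_W (β t : ℝ) (hu : 0 < 1 - t^2) :
    HasDerivAt (fun t : ℝ => (1-t^2)^(β-1)) ((β-1) * (1-t^2)^(β-2) * (-(2*t))) t := by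
  have h1 : HasDerivAt (fun t : ℝ => 1 - t^2) (-(2*t)) t := by
    simpa using (hasDerivAt_pow 2 t).const_sub 1
  have h2 := h1.rpow_const (p := β-1) (Or.inl (ne_of_gt hu))
  convert h2 using 1
  rw [show β-1-1 = β-2 by ring]; ring



lemma subkey {β : ℝ} (hβ : 1 < β) (φ ψ : ℝ → ℝ)
    (hφ : ∀ t ∈ Ioo (0:ℝ) 1, HasDerivAt φ (ψ t) t) (hψ : ContinuousOn ψ (Ioo (0:ℝ) 1))
    {a s : ℝ} (ha : a ∈ Icc (1/4:ℝ) (1/2)) (hs : s ∈ Ico (1/2:ℝ) 1)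
    {B : ℝ} (hBge : ∫ t in a..s, t * (ψ t^2 * (1-t^2)^β) ≤ B) :
    ∫ t in a..s, t * (φ t^2 * (1-t^2)^(β-2)) ≤ φ a^2/(β-1) + (16/(β-1)^2) * B := by
  have hb : 0 < β - 1 := by linarith
  have has : a ≤ s := le_trans ha.2 hs.1
  have hsub : Icc a s ⊆ Ioo (0:ℝ) 1 := fun t ht =>
    ⟨lt_of_lt_of_le (by linarith [ha.1]) ht.1, lt_of_le_of_lt ht.2 hs.2⟩
  have hu : ∀ t ∈ Icc a s, 0 < 1 - t^2 := fun t ht => by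
    have h1 := (hsub ht).1; have h2 := (hsub ht).2; nlinarith
  -- continuity facts on Icc a s
  have hφc : ContinuousOn φ (Icc a s) := fun t ht =>
    ((hφ t (hsub ht)).continuousAt).continuousWithinAt
  have hψc : ContinuousOn ψ (Icc a s) := hψ.mono hsub
  have hbase : ContinuousOn (fun t : ℝ => 1 - t^2) (Icc a s) := by fun_prop
  have hW2c : ContinuousOn (fun t : ℝ => (1-t^2)^(β-2)) (Icc a s) :=
    hbase.rpow_const fun t ht => Or.inl (ne_of_gt (hu t ht))
  have hWc : ContinuousOn (fun t : ℝ => (1-t^2)^(β-1)) (Icc a s) :=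
    hbase.rpow_const fun t ht => Or.inl (ne_of_gt (hu t ht))
  have hWbc : ContinuousOn (fun t : ℝ => (1-t^2)^β) (Icc a s) :=
    hbase.rpow_const fun t ht => Or.inl (ne_of_gt (hu t ht))
  have hG1c : ContinuousOn (fun t => 2*φ t*ψ t*(1-t^2)^(β-1)) (Icc a s) :=
    (((continuousOn_const.mul hφc).mul hψc).mul hWc)
  have hG2c : ContinuousOn (fun t => t * (φ t^2 * (1-t^2)^(β-2))) (Icc a s) :=
    continuousOn_id.mul ((hφc.pow 2).mul hW2c)
  have hHc : ContinuousOn (fun t => t * (ψ t^2 * (1-t^2)^β)) (Icc a s) :=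
    continuousOn_id.mul ((hψc.pow 2).mul hWbc)
  have hG1i : IntervalIntegrable (fun t => 2*φ t*ψ t*(1-t^2)^(β-1)) volume a s :=
    (hG1c.mono (by rw [uIcc_of_le has])).intervalIntegrable
  have hG2i : IntervalIntegrable (fun t => t * (φ t^2 * (1-t^2)^(β-2))) volume a s :=
    (hG2c.mono (by rw [uIcc_of_le has])).intervalIntegrable
  have hHi : IntervalIntegrable (fun t => t * (ψ t^2 * (1-t^2)^β)) volume a s :=
    (hHc.mono (by rw [uIcc_of_le has])).intervalIntegrable
  -- FTC for F = φ² * W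
  set F : ℝ → ℝ := fun t => φ t^2 * (1-t^2)^(β-1) with hFdef
  have hF : ∀ t ∈ Icc a s, HasDerivAt F
      (2*φ t*ψ t*(1-t^2)^(β-1) + (-(2*(β-1))) * (t * (φ t^2 * (1-t^2)^(β-2)))) t := by
    intro t ht
    have h1 := ((hφ t (hsub ht)).pow 2).mul (hasDerivAt_W β t (hu t ht))
    refine h1.congr_deriv ?_
    simp only [Pi.pow_apply, Nat.add_one_sub_one, pow_one]; push_cast
    ring
  have hFTC : ∫ t in a..s, (2*φ t*ψ t*(1-t^2)^(β-1)
      + (-(2*(β-1))) * (t * (φ t^2 * (1-t^2)^(β-2)))) = F s - F a := by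
    refine integral_eq_sub_of_hasDerivAt (fun t ht => hF t (by rwa [uIcc_of_le has] at ht)) ?_
    exact ((hG1c.add ((continuousOn_const.mul hG2c))).mono
      (by rw [uIcc_of_le has])).intervalIntegrable
  have hsplit : (∫ t in a..s, 2*φ t*ψ t*(1-t^2)^(β-1))
      + (-(2*(β-1))) * ∫ t in a..s, t * (φ t^2 * (1-t^2)^(β-2)) = F s - F a := by
    rw [← hFTC, integral_add hG1i (hG2i.const_mul _), intervalIntegral.integral_const_mul]
  -- bound the cross term
  have hG1le : (∫ t in a..s, 2*φ t*ψ t*(1-t^2)^(β-1))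
      ≤ (β-1) * (∫ t in a..s, t * (φ t^2 * (1-t^2)^(β-2)))
        + (16/(β-1)) * ∫ t in a..s, t * (ψ t^2 * (1-t^2)^β) := by
    rw [← intervalIntegral.integral_const_mul, ← intervalIntegral.integral_const_mul, ← integral_add
      (hG2i.const_mul _) (hHi.const_mul _)]
    refine integral_mono_on has hG1i ((hG2i.const_mul _).add (hHi.const_mul _)) ?_
    intro t ht
    have hu0 := hu t ht
    have hx2 : (((1-t^2))^((β-2)/2))^2 = (1-t^2)^(β-2) := by
      rw [sq, ← Real.rpow_add hu0]; ring_nf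
    have hy2 : (((1-t^2))^(β/2))^2 = (1-t^2)^β := by
      rw [sq, ← Real.rpow_add hu0]; ring_nf
    have hxy : ((1-t^2))^((β-2)/2) * ((1-t^2))^(β/2) = (1-t^2)^(β-1) := by
      rw [← Real.rpow_add hu0]; ring_nf
    have ht4 : 1/4 ≤ t := le_trans ha.1 ht.1
    have h := amgm β t (φ t * (1-t^2)^((β-2)/2)) (ψ t * (1-t^2)^(β/2)) hb ht4
    calc 2*φ t*ψ t*(1-t^2)^(β-1)
        = 2*((φ t * (1-t^2)^((β-2)/2)) * (ψ t * (1-t^2)^(β/2))) := by rw [← hxy]; ring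
      _ ≤ (β-1)*t*(φ t * (1-t^2)^((β-2)/2))^2 + (16/(β-1))*(t*(ψ t * (1-t^2)^(β/2))^2) := h
      _ = (β-1) * (t * (φ t^2 * (1-t^2)^(β-2))) + (16/(β-1)) * (t * (ψ t^2 * (1-t^2)^β)) := by
          rw [mul_pow, mul_pow, hx2, hy2]; ring
  -- boundary terms
  have hFs : 0 ≤ F s := by
    have := (hu s ⟨has, le_refl s⟩)
    exact mul_nonneg (sq_nonneg _) (Real.rpow_nonneg this.le _)
  have hFa : F a ≤ φ a^2 := by
    have h1 : (1-a^2)^(β-1) ≤ 1 := by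
      refine Real.rpow_le_one ?_ ?_ (by linarith)
      · exact (hu a ⟨le_refl a, has⟩).le
      · nlinarith [ha.1]
    exact mul_le_of_le_one_right (sq_nonneg _) h1
  -- combine
  have hIH : ∫ t in a..s, t * (ψ t^2 * (1-t^2)^β) ≤ B := hBge
  set IG2 := ∫ t in a..s, t * (φ t^2 * (1-t^2)^(β-2)) with hIG2
  have hmain : (β-1) * IG2 ≤ φ a^2 + (16/(β-1)) * B := by
    have h16 : 0 < 16/(β-1) := by positivity
    nlinarith [hsplit, hG1le, hFs, hFa, hIH, mul_le_mul_of_nonneg_left hIH h16.le]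
  rw [div_add' _ _ _ (ne_of_gt hb)] at *
  refine (le_div_iff₀ hb).mpr ?_
  calc IG2 * (β-1) = (β-1) * IG2 := by ring
    _ ≤ φ a^2 + (16/(β-1)) * B := hmain
    _ = (φ a^2 + 16/(β-1)^2 * B * (β-1)) := by field_simp


noncomputable def oneC (β : ℝ) : ℝ := 16/9 + (16*(4/3)^β/(β-1) + 16/(β-1)^2)

lemma oneC_pos {β : ℝ} (hβ : 1 < β) : 0 < oneC β := by
  have h1 : 0 < β - 1 := by linarith
  have h2 : 0 < (4/3:ℝ)^β := Real.rpow_pos_of_pos (by norm_num) β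
  unfold oneC; positivity

set_option maxHeartbeats 1000000 in
lemma oneDim {β : ℝ} (hβ : 1 < β) (φ ψ : ℝ → ℝ)
    (hφ : ∀ t ∈ Ioo (0:ℝ) 1, HasDerivAt φ (ψ t) t)
    (hψ : ContinuousOn ψ (Ioo (0:ℝ) 1)) :
    ∫⁻ t in Ioo (0:ℝ) 1, ENNReal.ofReal (t * (φ t^2 * (1-t^2)^(β-2)))
      ≤ ENNReal.ofReal (oneC β) *
        ∫⁻ t in Ioo (0:ℝ) 1, ENNReal.ofReal (t * ((φ t^2 + ψ t^2) * (1-t^2)^β)) := by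
  have hb : 0 < β - 1 := by linarith
  set J := ∫⁻ t in Ioo (0:ℝ) 1, ENNReal.ofReal (t * ((φ t^2 + ψ t^2) * (1-t^2)^β)) with hJdef
  rcases eq_or_ne J ⊤ with hJ | hJ
  · rw [hJ, ENNReal.mul_top (by simpa using (oneC_pos hβ).not_ge ∘ ENNReal.ofReal_eq_zero.mp)]
    exact le_top
  -- basic facts
  have hu : ∀ t ∈ Ioo (0:ℝ) 1, 0 < 1 - t^2 := fun t ht => by nlinarith [ht.1, ht.2]
  have hφc : ContinuousOn φ (Ioo (0:ℝ) 1) := fun t ht =>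
    ((hφ t ht).continuousAt).continuousWithinAt
  have hbase : ContinuousOn (fun t : ℝ => 1 - t^2) (Ioo (0:ℝ) 1) := by fun_prop
  have hWbc : ContinuousOn (fun t : ℝ => (1-t^2)^β) (Ioo (0:ℝ) 1) :=
    hbase.rpow_const fun t ht => Or.inl (ne_of_gt (hu t ht))
  have hW2c : ContinuousOn (fun t : ℝ => (1-t^2)^(β-2)) (Ioo (0:ℝ) 1) :=
    hbase.rpow_const fun t ht => Or.inl (ne_of_gt (hu t ht))
  have hRc : ContinuousOn (fun t => t * ((φ t^2 + ψ t^2) * (1-t^2)^β)) (Ioo (0:ℝ) 1) :=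
    continuousOn_id.mul (((hφc.pow 2).add (hψ.pow 2)).mul hWbc)
  have hAc : ContinuousOn (fun t => t * (φ t^2 * (1-t^2)^β)) (Ioo (0:ℝ) 1) :=
    continuousOn_id.mul ((hφc.pow 2).mul hWbc)
  have hBc : ContinuousOn (fun t => t * (ψ t^2 * (1-t^2)^β)) (Ioo (0:ℝ) 1) :=
    continuousOn_id.mul ((hψ.pow 2).mul hWbc)
  have hG2c : ContinuousOn (fun t => t * (φ t^2 * (1-t^2)^(β-2))) (Ioo (0:ℝ) 1) :=
    continuousOn_id.mul ((hφc.pow 2).mul hW2c)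
  have hRnn : ∀ t ∈ Ioo (0:ℝ) 1, 0 ≤ t * ((φ t^2 + ψ t^2) * (1-t^2)^β) := fun t ht =>
    mul_nonneg ht.1.le (mul_nonneg (by positivity) (Real.rpow_nonneg (hu t ht).le _))
  have hAnn : ∀ t ∈ Ioo (0:ℝ) 1, 0 ≤ t * (φ t^2 * (1-t^2)^β) := fun t ht =>
    mul_nonneg ht.1.le (mul_nonneg (sq_nonneg _) (Real.rpow_nonneg (hu t ht).le _))
  have hBnn : ∀ t ∈ Ioo (0:ℝ) 1, 0 ≤ t * (ψ t^2 * (1-t^2)^β) := fun t ht =>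
    mul_nonneg ht.1.le (mul_nonneg (sq_nonneg _) (Real.rpow_nonneg (hu t ht).le _))
  -- integrability of RHS pieces
  have hRint : IntegrableOn (fun t => t * ((φ t^2 + ψ t^2) * (1-t^2)^β)) (Ioo (0:ℝ) 1) := by
    refine ⟨hRc.aestronglyMeasurable measurableSet_Ioo, ?_⟩
    rw [hasFiniteIntegral_iff_ofReal
      ((ae_restrict_iff' measurableSet_Ioo).mpr (Filter.Eventually.of_forall hRnn))]
    exact lt_top_iff_ne_top.mpr hJ
  have hAint : IntegrableOn (fun t => t * (φ t^2 * (1-t^2)^β)) (Ioo (0:ℝ) 1) := by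
    refine Integrable.mono hRint (hAc.aestronglyMeasurable measurableSet_Ioo) ?_
    rw [ae_restrict_iff' measurableSet_Ioo]
    refine Filter.Eventually.of_forall fun t ht => ?_
    rw [Real.norm_eq_abs, Real.norm_eq_abs, abs_of_nonneg (hAnn t ht), abs_of_nonneg (hRnn t ht)]
    have : 0 ≤ t * (ψ t^2 * (1-t^2)^β) := hBnn t ht
    nlinarith
  have hBint : IntegrableOn (fun t => t * (ψ t^2 * (1-t^2)^β)) (Ioo (0:ℝ) 1) := by
    refine Integrable.mono hRint (hBc.aestronglyMeasurable measurableSet_Ioo) ?_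
    rw [ae_restrict_iff' measurableSet_Ioo]
    refine Filter.Eventually.of_forall fun t ht => ?_
    rw [Real.norm_eq_abs, Real.norm_eq_abs, abs_of_nonneg (hBnn t ht), abs_of_nonneg (hRnn t ht)]
    have : 0 ≤ t * (φ t^2 * (1-t^2)^β) := hAnn t ht
    nlinarith
  set A := ∫ t in Ioo (0:ℝ) 1, t * (φ t^2 * (1-t^2)^β) with hAdef
  set Bv := ∫ t in Ioo (0:ℝ) 1, t * (ψ t^2 * (1-t^2)^β) with hBdef
  have hA0 : 0 ≤ A := setIntegral_nonneg measurableSet_Ioo hAnn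
  have hB0 : 0 ≤ Bv := setIntegral_nonneg measurableSet_Ioo hBnn
  have hJeq : J = ENNReal.ofReal (A + Bv) := by
    rw [hJdef, ← ofReal_integral_eq_lintegral_ofReal hRint
      ((ae_restrict_iff' measurableSet_Ioo).mpr (Filter.Eventually.of_forall hRnn))]
    congr 1
    rw [← integral_add hAint hBint]
    refine setIntegral_congr_fun measurableSet_Ioo fun t ht => ?_
    ring
  -- the key interval estimate
  set C3 : ℝ := 16*(4/3)^β/(β-1) + 16/(β-1)^2 with hC3def
  have hC30 : 0 < C3 := by
    have h2 : 0 < (4/3:ℝ)^β := Real.rpow_pos_of_pos (by norm_num) β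
    positivity
  have key : ∀ s ∈ Ico (1/2:ℝ) 1,
      ∫ t in (1/2:ℝ)..s, t * (φ t^2 * (1-t^2)^(β-2)) ≤ C3 * (A + Bv) := by
    intro s hs
    -- B-piece bound, uniform over a
    have hBge : ∀ a ∈ Icc (1/4:ℝ) (1/2), ∫ t in a..s, t * (ψ t^2 * (1-t^2)^β) ≤ Bv := by
      intro a ha
      have has : a ≤ s := le_trans ha.2 hs.1
      rw [integral_of_le has]
      refine setIntegral_mono_set hBint
        ((ae_restrict_iff' measurableSet_Ioo).mpr (Filter.Eventually.of_forall hBnn))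
        (HasSubset.Subset.eventuallyLE fun t ht => ?_)
      exact ⟨lt_of_lt_of_le (by linarith [ha.1]) ht.1.le, lt_of_le_of_lt ht.2 hs.2⟩
    have hsubIcc : ∀ a ∈ Icc (1/4:ℝ) (1/2), Icc a s ⊆ Ioo (0:ℝ) 1 := fun a ha t ht =>
      ⟨lt_of_lt_of_le (by linarith [ha.1]) ht.1, lt_of_le_of_lt ht.2 hs.2⟩
    -- pointwise-in-a estimate for the half-interval integral
    have pointA : ∀ a ∈ Icc (1/4:ℝ) (1/2),
        ∫ t in (1/2:ℝ)..s, t * (φ t^2 * (1-t^2)^(β-2))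
          ≤ φ a^2/(β-1) + (16/(β-1)^2) * Bv := by
      intro a ha
      have has : a ≤ s := le_trans ha.2 hs.1
      have h1 : IntervalIntegrable (fun t => t * (φ t^2 * (1-t^2)^(β-2))) volume a (1/2) :=
        ((hG2c.mono (hsubIcc a ha)).mono (by rw [uIcc_of_le ha.2]; exact Icc_subset_Icc le_rfl hs.1)).intervalIntegrable
      have h2 : IntervalIntegrable (fun t => t * (φ t^2 * (1-t^2)^(β-2))) volume (1/2) s :=
        ((hG2c.mono (hsubIcc a ha)).mono (by rw [uIcc_of_le hs.1]; exact Icc_subset_Icc ha.2 le_rfl)).intervalIntegrable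
      have hadd := integral_add_adjacent_intervals h1 h2
      have hfirst : 0 ≤ ∫ t in a..(1/2:ℝ), t * (φ t^2 * (1-t^2)^(β-2)) := by
        refine integral_nonneg ha.2 fun t ht => ?_
        have h0t : (0:ℝ) < t := lt_of_lt_of_le (by linarith [ha.1]) ht.1
        have hT : 0 < 1 - t^2 := by nlinarith [ht.2]
        exact mul_nonneg h0t.le (mul_nonneg (sq_nonneg _) (Real.rpow_nonneg hT.le _))
      have hsk := subkey hβ φ ψ hφ hψ ha hs (hBge a ha)
      linarith [hsk, hadd, hfirst]
    -- average over a
    set Ihs := ∫ t in (1/2:ℝ)..s, t * (φ t^2 * (1-t^2)^(β-2)) with hIhs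
    have hφ2i : IntervalIntegrable (fun a => φ a^2) volume (1/4) (1/2) := by
      refine ContinuousOn.intervalIntegrable ?_
      rw [uIcc_of_le (by norm_num)]
      exact (hφc.pow 2).mono fun t ht => ⟨by linarith [ht.1], by linarith [ht.2]⟩
    have havg := integral_mono_on (by norm_num : (1/4:ℝ) ≤ 1/2)
      (intervalIntegrable_const (c := Ihs))
      ((hφ2i.div_const (β-1)).add (intervalIntegrable_const (c := (16/(β-1)^2) * Bv)))
      pointA
    rw [intervalIntegral.integral_const, intervalIntegral.integral_add (hφ2i.div_const (β-1))
      (intervalIntegrable_const (c := (16/(β-1)^2) * Bv)), intervalIntegral.integral_div, intervalIntegral.integral_const] at havg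
    set P := ∫ a in (1/4:ℝ)..(1/2:ℝ), φ a^2 with hPdef
    -- bound P by A
    have hPpt : ∀ a ∈ Icc (1/4:ℝ) (1/2),
        φ a^2 ≤ (4*(4/3)^β) * (a * (φ a^2 * (1-a^2)^β)) := by
      intro a ha
      have h34 : (3/4:ℝ) ≤ 1 - a^2 := by nlinarith [ha.1, ha.2]
      have hr : (3/4:ℝ)^β ≤ (1-a^2)^β :=
        Real.rpow_le_rpow (by norm_num) h34 (by linarith)
      have hK : (0:ℝ) < 4*(4/3)^β := by positivity
      have hprod : (1/4:ℝ)*(3/4)^β ≤ a * (1-a^2)^β := by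
        refine mul_le_mul ha.1 hr (Real.rpow_nonneg (by norm_num) _) (by linarith [ha.1])
      have hid : (4*(4/3:ℝ)^β) * ((1/4)*(3/4)^β) = 1 := by
        have hmul : (4/3:ℝ)^β*(3/4)^β = 1 := by
          rw [← Real.mul_rpow (by norm_num) (by norm_num)]
          norm_num
        calc (4*(4/3:ℝ)^β) * ((1/4)*(3/4)^β) = (4*(1/4)) * ((4/3:ℝ)^β*(3/4)^β) := by ring
          _ = 1 := by rw [hmul]; norm_num
      have hkey := mul_nonneg (mul_nonneg hK.le (sub_nonneg.mpr hprod)) (sq_nonneg (φ a))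
      nlinarith [hkey, hid]
    have hwAi : IntervalIntegrable (fun a => a * (φ a^2 * (1-a^2)^β)) volume (1/4) (1/2) := by
      refine ContinuousOn.intervalIntegrable ?_
      rw [uIcc_of_le (by norm_num)]
      exact hAc.mono fun t ht => ⟨by linarith [ht.1], by linarith [ht.2]⟩
    have hP1 : P ≤ (4*(4/3)^β) * ∫ a in (1/4:ℝ)..(1/2:ℝ), a * (φ a^2 * (1-a^2)^β) := by
      rw [← intervalIntegral.integral_const_mul]
      exact integral_mono_on (by norm_num) hφ2i (hwAi.const_mul _) hPpt
    have hP2 : ∫ a in (1/4:ℝ)..(1/2:ℝ), a * (φ a^2 * (1-a^2)^β) ≤ A := by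
      rw [integral_of_le (by norm_num)]
      refine setIntegral_mono_set hAint
        ((ae_restrict_iff' measurableSet_Ioo).mpr (Filter.Eventually.of_forall hAnn))
        (HasSubset.Subset.eventuallyLE fun t ht => ⟨by linarith [ht.1], by linarith [ht.2]⟩)
    have hK : (0:ℝ) < 4*(4/3)^β := by positivity
    have hPA : P ≤ (4*(4/3)^β) * A :=
      le_trans hP1 (mul_le_mul_of_nonneg_left hP2 hK.le)
    -- conclude
    have hIle : Ihs ≤ 4*(P/(β-1)) + (16/(β-1)^2)*Bv := by
      have : (1/2 - 1/4 : ℝ) • Ihs = (1/4) * Ihs := by norm_num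
      rw [this] at havg
      have hsmul : ((1/2:ℝ) - 1/4) • ((16/(β-1)^2) * Bv) = (1/4) * ((16/(β-1)^2)*Bv) := by
        norm_num
      rw [hsmul] at havg
      linarith
    have hPdiv : P/(β-1) ≤ (4*(4/3)^β) * A / (β-1) := by
      exact div_le_div_of_nonneg_right hPA hb.le
    rw [hC3def]
    have hterm : 4*((4*(4/3)^β) * A / (β-1)) = 16*(4/3)^β/(β-1) * A := by
      field_simp; ring
    nlinarith [hIle, hPdiv, hterm, mul_nonneg (le_of_lt (show (0:ℝ) < 16/(β-1)^2 by positivity)) hA0,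
      mul_nonneg (div_nonneg (by positivity : (0:ℝ) ≤ 16*(4/3)^β) hb.le) hB0]
  -- lintegral side
  have hsplitset : Ioc (0:ℝ) (1/2) ∪ Ioo (1/2:ℝ) 1 = Ioo (0:ℝ) 1 :=
    Ioc_union_Ioo_eq_Ioo (by norm_num) (by norm_num)
  have hdisj : Disjoint (Ioc (0:ℝ) (1/2)) (Ioo (1/2:ℝ) 1) :=
    Set.disjoint_left.mpr fun t ht ht' => absurd ht.2 (not_le.mpr ht'.1)
  have hpart1 : ∫⁻ t in Ioc (0:ℝ) (1/2), ENNReal.ofReal (t * (φ t^2 * (1-t^2)^(β-2)))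
      ≤ ENNReal.ofReal (16/9) * J := by
    have hpt : ∀ᵐ t ∂(volume.restrict (Ioc (0:ℝ) (1/2))),
        ENNReal.ofReal (t * (φ t^2 * (1-t^2)^(β-2)))
          ≤ ENNReal.ofReal ((16/9) * (t * ((φ t^2 + ψ t^2) * (1-t^2)^β))) := by
      rw [ae_restrict_iff' measurableSet_Ioc]
      refine Filter.Eventually.of_forall fun t ht => ?_
      refine ENNReal.ofReal_le_ofReal ?_
      have h1 : (0:ℝ) < t := ht.1
      have hu0 : (0:ℝ) < 1 - t^2 := by nlinarith [ht.2]
      have hu34 : (3/4:ℝ) ≤ 1 - t^2 := by nlinarith [ht.2, h1]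
      have hsq : (1-t^2)^(2:ℝ) = (1-t^2)^2 := by
        rw [show (2:ℝ) = ((2:ℕ):ℝ) by norm_num, Real.rpow_natCast]
      have h2 : (1-t^2)^(β-2) ≤ (16/9) * (1-t^2)^β := by
        have e1 : (1-t^2)^(β-2) = (1-t^2)^β / ((1-t^2)^2 : ℝ) := by
          rw [Real.rpow_sub hu0, hsq]
        rw [e1, div_le_iff₀ (by positivity)]
        have hβnn : 0 ≤ (1-t^2)^β := Real.rpow_nonneg hu0.le β
        have h5 : (0:ℝ) ≤ 16/9*((1-t^2)^2) - 1 := by nlinarith [hu34]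
        nlinarith [mul_nonneg hβnn h5]
      have h3 := mul_le_mul_of_nonneg_left h2 (mul_nonneg h1.le (sq_nonneg (φ t)))
      have h4 : 0 ≤ t * ψ t^2 * (1-t^2)^β :=
        mul_nonneg (mul_nonneg h1.le (sq_nonneg _)) (Real.rpow_nonneg hu0.le β)
      nlinarith [h3, h4]
    calc ∫⁻ t in Ioc (0:ℝ) (1/2), ENNReal.ofReal (t * (φ t^2 * (1-t^2)^(β-2)))
        ≤ ∫⁻ t in Ioc (0:ℝ) (1/2),
            ENNReal.ofReal ((16/9) * (t * ((φ t^2 + ψ t^2) * (1-t^2)^β))) := lintegral_mono_ae hpt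
      _ = ENNReal.ofReal (16/9) * ∫⁻ t in Ioc (0:ℝ) (1/2),
            ENNReal.ofReal (t * ((φ t^2 + ψ t^2) * (1-t^2)^β)) := by
          simp_rw [ENNReal.ofReal_mul (by norm_num : (0:ℝ) ≤ 16/9)]
          rw [lintegral_const_mul' _ _ ENNReal.ofReal_ne_top]
      _ ≤ ENNReal.ofReal (16/9) * J := by
          refine mul_le_mul_right (lintegral_mono_set fun t ht => ?_) _
          exact ⟨ht.1, lt_of_le_of_lt ht.2 (by norm_num)⟩
  have hpart2 : ∫⁻ t in Ioo (1/2:ℝ) 1, ENNReal.ofReal (t * (φ t^2 * (1-t^2)^(β-2)))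
      ≤ ENNReal.ofReal (C3 * (A + Bv)) := by
    set sn : ℕ → ℝ := fun n => 1 - 1/(n+2) with hsn
    have hsn_mem : ∀ n : ℕ, sn n ∈ Ico (1/2:ℝ) 1 := by
      intro n
      have h2 : (2:ℝ) ≤ (n:ℝ) + 2 := by have := Nat.cast_nonneg (α := ℝ) n; linarith
      have hpos : (0:ℝ) < (n:ℝ) + 2 := by positivity
      constructor
      · have : 1/((n:ℝ)+2) ≤ 1/2 := one_div_le_one_div_of_le (by norm_num) h2
        simp only [hsn]; linarith
      · have : 0 < 1/((n:ℝ)+2) := by positivity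
        simp only [hsn]; linarith
    have hsn_mono : Monotone sn := by
      intro n m hnm
      simp only [hsn]
      have h1 : (0:ℝ) < (n:ℝ) + 2 := by positivity
      have : 1/((m:ℝ)+2) ≤ 1/((n:ℝ)+2) :=
        one_div_le_one_div_of_le h1 (by have : (n:ℝ) ≤ m := Nat.cast_le.mpr hnm; linarith)
      linarith
    have hIooSub : ∀ n : ℕ, Ioo (1/2:ℝ) (sn n) ⊆ Ioo (0:ℝ) 1 := fun n t ht =>
      ⟨by linarith [ht.1], lt_of_lt_of_le ht.2 (hsn_mem n).2.le⟩
    have hmeasn : ∀ n : ℕ, Measurable ((Ioo (1/2:ℝ) (sn n)).indicator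
        (fun t => ENNReal.ofReal (t * (φ t^2 * (1-t^2)^(β-2))))) := by
      intro n
      have hm := measurable_indicator_of_isOpen isOpen_Ioo (hG2c.mono (hIooSub n))
      have heq : (Ioo (1/2:ℝ) (sn n)).indicator
          (fun t => ENNReal.ofReal (t * (φ t^2 * (1-t^2)^(β-2))))
          = fun t => ENNReal.ofReal ((Ioo (1/2:ℝ) (sn n)).indicator
              (fun t => t * (φ t^2 * (1-t^2)^(β-2))) t) := by
        funext t
        by_cases h : t ∈ Ioo (1/2:ℝ) (sn n)
        · rw [Set.indicator_of_mem h, Set.indicator_of_mem h]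
        · rw [Set.indicator_of_notMem h, Set.indicator_of_notMem h, ENNReal.ofReal_zero]
      rw [heq]; exact hm.ennreal_ofReal
    calc ∫⁻ t in Ioo (1/2:ℝ) 1, ENNReal.ofReal (t * (φ t^2 * (1-t^2)^(β-2)))
        = ∫⁻ t, (Ioo (1/2:ℝ) 1).indicator
            (fun t => ENNReal.ofReal (t * (φ t^2 * (1-t^2)^(β-2)))) t :=
          (lintegral_indicator measurableSet_Ioo _).symm
      _ = ∫⁻ t, ⨆ n : ℕ, (Ioo (1/2:ℝ) (sn n)).indicator
            (fun t => ENNReal.ofReal (t * (φ t^2 * (1-t^2)^(β-2)))) t := by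
          congr 1; funext t
          by_cases ht : t ∈ Ioo (1/2:ℝ) 1
          · rw [Set.indicator_of_mem ht]
            obtain ⟨n, hn⟩ : ∃ n : ℕ, 1/(1-t) < (n:ℝ) := exists_nat_gt _
            have h1t : 0 < 1 - t := by linarith [ht.2]
            have hlt : t < sn n := by
              have hx : 1/((n:ℝ)+2) < 1 - t := by
                rw [div_lt_iff₀ (by positivity)]
                rw [div_lt_iff₀ h1t] at hn
                nlinarith
              simp only [hsn]; linarith
            refine le_antisymm ?_ (iSup_le fun m => Set.indicator_le_self _ _ t)
            exact le_iSup_of_le n (le_of_eq (Set.indicator_of_mem (Set.mem_Ioo.mpr ⟨ht.1, hlt⟩) (fun t => ENNReal.ofReal (t * (φ t^2 * (1-t^2)^(β-2))))).symm)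
          · rw [Set.indicator_of_notMem ht]
            symm
            simp only [ENNReal.iSup_eq_zero]
            intro n
            exact Set.indicator_of_notMem
              (fun hc => ht ⟨hc.1, lt_of_lt_of_le hc.2 (hsn_mem n).2.le⟩) _
      _ = ⨆ n : ℕ, ∫⁻ t, (Ioo (1/2:ℝ) (sn n)).indicator
            (fun t => ENNReal.ofReal (t * (φ t^2 * (1-t^2)^(β-2)))) t :=
          lintegral_iSup hmeasn (fun n m hnm => Set.indicator_le_indicator_of_subset
            (Ioo_subset_Ioo le_rfl (hsn_mono hnm)) (fun _ => zero_le))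
      _ ≤ ENNReal.ofReal (C3 * (A + Bv)) := by
          refine iSup_le fun n => ?_
          rw [lintegral_indicator measurableSet_Ioo _]
          have hint : IntegrableOn (fun t => t * (φ t^2 * (1-t^2)^(β-2)))
              (Ioo (1/2:ℝ) (sn n)) := by
            refine (ContinuousOn.integrableOn_Icc ?_).mono_set Ioo_subset_Icc_self
            refine hG2c.mono fun t ht => ⟨by linarith [ht.1, (hsn_mem n).1], ?_⟩
            exact lt_of_le_of_lt ht.2 (hsn_mem n).2
          have hnn : ∀ t ∈ Ioo (1/2:ℝ) (sn n), 0 ≤ t * (φ t^2 * (1-t^2)^(β-2)) := by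
            intro t ht
            have h01 := hIooSub n ht
            exact mul_nonneg h01.1.le (mul_nonneg (sq_nonneg _)
              (Real.rpow_nonneg (hu t h01).le _))
          rw [← ofReal_integral_eq_lintegral_ofReal hint
            ((ae_restrict_iff' measurableSet_Ioo).mpr (Filter.Eventually.of_forall hnn))]
          refine ENNReal.ofReal_le_ofReal ?_
          rcases le_or_gt (sn n) (1/2:ℝ) with hle | hlt
          · rw [Set.Ioo_eq_empty (not_lt.mpr hle), MeasureTheory.setIntegral_empty]
            exact mul_nonneg hC30.le (add_nonneg hA0 hB0)
          · rw [← MeasureTheory.integral_Ioc_eq_integral_Ioo,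
              ← intervalIntegral.integral_of_le hlt.le]
            exact key (sn n) (hsn_mem n)
  calc ∫⁻ t in Ioo (0:ℝ) 1, ENNReal.ofReal (t * (φ t^2 * (1-t^2)^(β-2)))
      = (∫⁻ t in Ioc (0:ℝ) (1/2), ENNReal.ofReal (t * (φ t^2 * (1-t^2)^(β-2))))
        + ∫⁻ t in Ioo (1/2:ℝ) 1, ENNReal.ofReal (t * (φ t^2 * (1-t^2)^(β-2))) := by
        rw [← hsplitset, lintegral_union measurableSet_Ioo hdisj]
    _ ≤ ENNReal.ofReal (16/9) * J + ENNReal.ofReal (C3 * (A + Bv)) := add_le_add hpart1 hpart2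
    _ = ENNReal.ofReal (16/9) * J + ENNReal.ofReal C3 * J := by
        rw [ENNReal.ofReal_mul hC30.le, ← hJeq]
    _ = (ENNReal.ofReal (16/9) + ENNReal.ofReal C3) * J := by rw [add_mul]
    _ = ENNReal.ofReal (oneC β) * J := by
        rw [← ENNReal.ofReal_add (by norm_num) hC30.le]
        rfl


/-- Weighted Hardy-type inequality oset_option maxHeartbeats 1000000 in
n the open unit ball `D ⊂ ℝ²` for `κ > 2`:
there is `C_H > 0` such that for every `C¹` function `g` on `D` with
`∫_D (g² + |∇g|²)(1-|r|²)^{κ/2} dr < ∞` one has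
`∫_D g² (1-|r|²)^{κ/2-2} dr ≤ C_H ∫_D (g² + |∇g|²)(1-|r|²)^{κ/2} dr`. -/
theorem weighted_hardy_inequality (κ : ℝ) (hκ : 2 < κ) :
    ∃ C > 0, ∀ g : E2 → ℝ,
      ContDiffOn ℝ 1 g (Metric.ball (0 : E2) 1) →
      IntegrableOn
        (fun r => (g r ^ 2 + ‖gradient g r‖ ^ 2) * (1 - ‖r‖ ^ 2) ^ (κ / 2))
        (Metric.ball (0 : E2) 1) →
      ∫ r in Metric.ball (0 : E2) 1, g r ^ 2 * (1 - ‖r‖ ^ 2) ^ (κ / 2 - 2)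
        ≤ C * ∫ r in Metric.ball (0 : E2) 1,
            (g r ^ 2 + ‖gradient g r‖ ^ 2) * (1 - ‖r‖ ^ 2) ^ (κ / 2) := by
  have hβ : 1 < κ/2 := by linarith
  refine ⟨oneC (κ/2), oneC_pos hβ, fun g hg hint => ?_⟩
  set f₁ : E2 → ℝ := fun r => g r ^ 2 * (1 - ‖r‖ ^ 2) ^ (κ / 2 - 2) with hf₁def
  set f₂ : E2 → ℝ := fun r => (g r ^ 2 + ‖gradient g r‖ ^ 2) * (1 - ‖r‖ ^ 2) ^ (κ / 2) with hf₂def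
  -- continuity facts on the ball
  have hgc : ContinuousOn g (Metric.ball (0:E2) 1) := hg.continuousOn
  have hfd : ContinuousOn (fderiv ℝ g) (Metric.ball (0:E2) 1) :=
    hg.continuousOn_fderiv_of_isOpen Metric.isOpen_ball le_rfl
  have hgradnorm : ∀ x : E2, ‖gradient g x‖ = ‖fderiv ℝ g x‖ := fun x => by
    rw [show gradient g x = (InnerProductSpace.toDual ℝ E2).symm (fderiv ℝ g x) from rfl]
    exact LinearIsometryEquiv.norm_map _ _
  have hball : ∀ r ∈ Metric.ball (0:E2) 1, 0 < 1 - ‖r‖^2 := fun r hr => by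
    have h1 : ‖r‖ < 1 := by rwa [Metric.mem_ball, dist_zero_right] at hr
    nlinarith [norm_nonneg r]
  have hgradc : ContinuousOn (fun r => ‖gradient g r‖) (Metric.ball (0:E2) 1) := by
    refine ContinuousOn.congr hfd.norm fun x _ => hgradnorm x
  have hnormc : ContinuousOn (fun r : E2 => (1:ℝ) - ‖r‖^2) (Metric.ball (0:E2) 1) := by fun_prop
  have hw1 : ContinuousOn (fun r : E2 => (1-‖r‖^2)^(κ/2-2)) (Metric.ball (0:E2) 1) :=
    hnormc.rpow_const fun r hr => Or.inl (ne_of_gt (hball r hr))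
  have hw2 : ContinuousOn (fun r : E2 => (1-‖r‖^2)^(κ/2)) (Metric.ball (0:E2) 1) :=
    hnormc.rpow_const fun r hr => Or.inl (ne_of_gt (hball r hr))
  have hf1c : ContinuousOn f₁ (Metric.ball (0:E2) 1) := (hgc.pow 2).mul hw1
  have hf2c : ContinuousOn f₂ (Metric.ball (0:E2) 1) := ((hgc.pow 2).add (hgradc.pow 2)).mul hw2
  have hm1 : Measurable ((Metric.ball (0:E2) 1).indicator f₁) :=
    measurable_indicator_of_isOpen Metric.isOpen_ball hf1c
  have hm2 : Measurable ((Metric.ball (0:E2) 1).indicator f₂) :=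
    measurable_indicator_of_isOpen Metric.isOpen_ball hf2c
  -- the per-direction estimate
  have hθ : ∀ θ : ℝ,
      (∫⁻ ρ in Ioo (0:ℝ) 1, ENNReal.ofReal (ρ * f₁ (ρ • T (Real.cos θ, Real.sin θ))))
        ≤ ENNReal.ofReal (oneC (κ/2)) *
          ∫⁻ ρ in Ioo (0:ℝ) 1, ENNReal.ofReal (ρ * f₂ (ρ • T (Real.cos θ, Real.sin θ))) := by
    intro θ
    set v : E2 := T (Real.cos θ, Real.sin θ) with hvdef
    set φ : ℝ → ℝ := fun t => g (t • v) with hφdef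
    set ψ : ℝ → ℝ := fun t => (fderiv ℝ g (t • v)) v with hψdef
    have hnormsq : ∀ ρ : ℝ, ‖(ρ • v : E2)‖^2 = ρ^2 := fun ρ => by
      rw [hvdef, smul_norm]; exact sq_abs ρ
    have hvmem : ∀ t ∈ Ioo (0:ℝ) 1, t • v ∈ Metric.ball (0:E2) 1 := by
      intro t ht
      rw [Metric.mem_ball, dist_zero_right, hvdef, smul_norm, abs_of_pos ht.1]
      exact ht.2
    have hφd : ∀ t ∈ Ioo (0:ℝ) 1, HasDerivAt φ (ψ t) t := by
      intro t ht
      have hdg : DifferentiableAt ℝ g (t • v) :=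
        (hg.contDiffAt (Metric.isOpen_ball.mem_nhds (hvmem t ht))).differentiableAt one_ne_zero
      have hc : HasDerivAt (fun t : ℝ => t • v) v t := by
        simpa using (hasDerivAt_id t).smul_const v
      exact hdg.hasFDerivAt.comp_hasDerivAt t hc
    have hψc : ContinuousOn ψ (Ioo (0:ℝ) 1) := by
      have hsm : ContinuousOn (fun t : ℝ => t • v) (Ioo (0:ℝ) 1) :=
        (continuous_id.smul continuous_const).continuousOn
      have h2 : ContinuousOn (fun t => fderiv ℝ g (t • v)) (Ioo (0:ℝ) 1) :=
        hfd.comp hsm fun t ht => hvmem t ht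
      exact h2.clm_apply continuousOn_const
    calc (∫⁻ ρ in Ioo (0:ℝ) 1, ENNReal.ofReal (ρ * f₁ (ρ • v)))
        = ∫⁻ ρ in Ioo (0:ℝ) 1, ENNReal.ofReal (ρ * (φ ρ^2 * (1-ρ^2)^(κ/2-2))) := by
          refine setLIntegral_congr_fun_ae measurableSet_Ioo
            (Filter.Eventually.of_forall fun ρ hρ => ?_)
          rw [hf₁def]
          simp only
          rw [hnormsq ρ]
      _ ≤ ENNReal.ofReal (oneC (κ/2)) *
          ∫⁻ ρ in Ioo (0:ℝ) 1, ENNReal.ofReal (ρ * ((φ ρ^2 + ψ ρ^2) * (1-ρ^2)^(κ/2))) :=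
          oneDim hβ φ ψ hφd hψc
      _ ≤ ENNReal.ofReal (oneC (κ/2)) *
          ∫⁻ ρ in Ioo (0:ℝ) 1, ENNReal.ofReal (ρ * f₂ (ρ • v)) := by
          refine mul_le_mul_right (lintegral_mono_ae ?_) _
          rw [ae_restrict_iff' measurableSet_Ioo]
          refine Filter.Eventually.of_forall fun ρ hρ => ENNReal.ofReal_le_ofReal ?_
          have hψle : ψ ρ^2 ≤ ‖gradient g (ρ • v)‖^2 := by
            have h1 : |ψ ρ| ≤ ‖fderiv ℝ g (ρ • v)‖ := by
              have h2 := (fderiv ℝ g (ρ • v)).le_opNorm v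
              rw [hvdef, v_norm, mul_one] at h2
              exact h2
            rw [hgradnorm]
            calc ψ ρ^2 = |ψ ρ|^2 := (sq_abs _).symm
              _ ≤ ‖fderiv ℝ g (ρ • v)‖^2 := pow_le_pow_left₀ (abs_nonneg _) h1 2
          rw [hf₂def]
          simp only
          rw [hnormsq ρ]
          have hu0 : (0:ℝ) ≤ 1 - ρ^2 := by nlinarith [hρ.1, hρ.2]
          refine mul_le_mul_of_nonneg_left ?_ hρ.1.le
          exact mul_le_mul_of_nonneg_right (add_le_add_right hψle _)
            (Real.rpow_nonneg hu0 _)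
  -- the main lintegral inequality
  have hlin : (∫⁻ r in Metric.ball (0:E2) 1, ENNReal.ofReal (f₁ r))
      ≤ ENNReal.ofReal (oneC (κ/2)) *
        ∫⁻ r in Metric.ball (0:E2) 1, ENNReal.ofReal (f₂ r) := by
    rw [transfer f₁ hm1, transfer f₂ hm2]
    calc ∫⁻ θ in Ioo (-π) π, ∫⁻ ρ in Ioo (0:ℝ) 1,
          ENNReal.ofReal (ρ * f₁ (ρ • T (Real.cos θ, Real.sin θ)))
        ≤ ∫⁻ θ in Ioo (-π) π, ENNReal.ofReal (oneC (κ/2)) *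
            ∫⁻ ρ in Ioo (0:ℝ) 1, ENNReal.ofReal (ρ * f₂ (ρ • T (Real.cos θ, Real.sin θ))) :=
          lintegral_mono fun θ => hθ θ
      _ = _ := lintegral_const_mul' _ _ ENNReal.ofReal_ne_top
  -- back to Bochner integrals
  have hf1nn : ∀ r ∈ Metric.ball (0:E2) 1, 0 ≤ f₁ r := fun r hr =>
    mul_nonneg (sq_nonneg _) (Real.rpow_nonneg (hball r hr).le _)
  have hf2nn : ∀ r ∈ Metric.ball (0:E2) 1, 0 ≤ f₂ r := fun r hr =>
    mul_nonneg (by positivity) (Real.rpow_nonneg (hball r hr).le _)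
  have hRHSof : ENNReal.ofReal (∫ r in Metric.ball (0:E2) 1, f₂ r)
      = ∫⁻ r in Metric.ball (0:E2) 1, ENNReal.ofReal (f₂ r) :=
    ofReal_integral_eq_lintegral_ofReal hint
      ((ae_restrict_iff' Metric.isOpen_ball.measurableSet).mpr
        (Filter.Eventually.of_forall hf2nn))
  have hRfin : (∫⁻ r in Metric.ball (0:E2) 1, ENNReal.ofReal (f₂ r)) ≠ ⊤ := by
    rw [← hRHSof]; exact ENNReal.ofReal_ne_top
  have hL : ∫ r in Metric.ball (0:E2) 1, f₁ r
      = (∫⁻ r in Metric.ball (0:E2) 1, ENNReal.ofReal (f₁ r)).toReal :=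
    integral_eq_lintegral_of_nonneg_ae
      ((ae_restrict_iff' Metric.isOpen_ball.measurableSet).mpr
        (Filter.Eventually.of_forall hf1nn))
      (hf1c.aestronglyMeasurable Metric.isOpen_ball.measurableSet)
  have hIntNN : 0 ≤ ∫ r in Metric.ball (0:E2) 1, f₂ r :=
    setIntegral_nonneg Metric.isOpen_ball.measurableSet hf2nn
  calc ∫ r in Metric.ball (0:E2) 1, g r ^ 2 * (1 - ‖r‖ ^ 2) ^ (κ / 2 - 2)
      = (∫⁻ r in Metric.ball (0:E2) 1, ENNReal.ofReal (f₁ r)).toReal := hL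
    _ ≤ (ENNReal.ofReal (oneC (κ/2)) *
          ∫⁻ r in Metric.ball (0:E2) 1, ENNReal.ofReal (f₂ r)).toReal :=
        ENNReal.toReal_mono (ENNReal.mul_ne_top ENNReal.ofReal_ne_top hRfin) hlin
    _ = oneC (κ/2) * ∫ r in Metric.ball (0:E2) 1,
          (g r ^ 2 + ‖gradient g r‖ ^ 2) * (1 - ‖r‖ ^ 2) ^ (κ / 2) := by
        rw [← hRHSof, ← ENNReal.ofReal_mul (oneC_pos hβ).le,
          ENNReal.toReal_ofReal (mul_nonneg (oneC_pos hβ).le hIntNN)]
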